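/- Let p be a prime with p ≡ 3 (mod 4), Q ⊂ GF(p)^× the set of quadratic residues and N the set of non-residues, and let S ⊊ GF(p) be a subset with |S| odd (so S^c = GF(p)∖S is non-empty). Then the Hamming weight of the codeword c = (r_N r_S, r_Q r_S) of the QQR code C_NQ satisfies wt(c) = p + Σ_{a∈GF(p)} χ(f_{S^c}(a)) = |X_{S^c}(GF(p))| − 2. -/

import Mathlib

open Finset

/-- `r_S = Σ_{i∈S} x^i`, viewed as an element of `R = GF(2)[x]/(x^p-1)`
(identified with functions `ZMod p → ZMod 2` recording coefficients). -/
def rOf {p : ℕ} (S : Finset (ZMod p)) : ZMod p → ZMod 2 :=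
  fun a => if a ∈ S then 1 else 0

/-- Multiplication in `R = GF(2)[x]/(x^p-1)` (cyclic convolution of coefficients). -/
def conv {p : ℕ} [NeZero p] (f g : ZMod p → ZMod 2) : ZMod p → ZMod 2 :=
  fun a => ∑ b : ZMod p, f b * g (a - b)

/-- Hamming weight of an element of `R`. -/
def wt {p : ℕ} [NeZero p] (f : ZMod p → ZMod 2) : ℕ :=
  (Finset.univ.filter fun a => f a ≠ 0).card

/-- The set `Q` of quadratic residues in `GF(p)ˣ`. -/
def Qset (p : ℕ) [NeZero p] : Finset (ZMod p) :=
  Finset.univ.filter fun a => a ≠ 0 ∧ ∃ b : ZMod p, b ^ 2 = a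

/-- The set `N` of quadratic non-residues in `GF(p)ˣ`. -/
def Nset (p : ℕ) [NeZero p] : Finset (ZMod p) :=
  Finset.univ.filter fun a => a ≠ 0 ∧ ¬∃ b : ZMod p, b ^ 2 = a

/-- The character sum `Σ_{a ∈ GF(p)} χ(f_S(a))` where `f_S(x) = Π_{b∈S}(x-b)` and
`χ` is the Legendre character. -/
def charSum (p : ℕ) [Fact p.Prime] (S : Finset (ZMod p)) : ℤ :=
  ∑ a : ZMod p, quadraticChar (ZMod p) (∏ b ∈ S, (a - b))

/-- `|X_S(GF(p))|`: the number of affine points of `y² = f_S(x)` over `GF(p)`,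
plus `2` points at infinity if `|S|` is even and `1` if `|S|` is odd. -/
noncomputable def Xcard (p : ℕ) (S : Finset (ZMod p)) : ℕ :=
  Nat.card {xy : ZMod p × ZMod p // xy.2 ^ 2 = ∏ b ∈ S, (xy.1 - b)} +
    if Even S.card then 2 else 1

/-- The QQR codeword `(r_N r_S, r_Q r_S)`. -/
def qqr (p : ℕ) [NeZero p] (S : Finset (ZMod p)) :
    (ZMod p → ZMod 2) × (ZMod p → ZMod 2) :=
  (conv (rOf (Nset p)) (rOf S), conv (rOf (Qset p)) (rOf S))

/-- Hamming weight of a length-`2p` vector identified with a pair of elements of `R`. -/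
def wt2 {p : ℕ} [NeZero p] (x : (ZMod p → ZMod 2) × (ZMod p → ZMod 2)) : ℕ :=
  wt x.1 + wt x.2

/-- The LQR codeword `c_S = (r_N r_S, r_Q r_S, r_N r_S*, r_Q r_S*)`. -/
def lqr (p : ℕ) [NeZero p] (S : Finset (ZMod p)) :
    ((ZMod p → ZMod 2) × (ZMod p → ZMod 2)) × ((ZMod p → ZMod 2) × (ZMod p → ZMod 2)) :=
  (qqr p S, qqr p Sᶜ)

/-- Hamming weight of a length-`4p` vector identified with a 4-tuple of elements of `R`. -/
def wt4 {p : ℕ} [NeZero p]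
    (x : ((ZMod p → ZMod 2) × (ZMod p → ZMod 2)) × ((ZMod p → ZMod 2) × (ZMod p → ZMod 2))) : ℕ :=
  wt2 x.1 + wt2 x.2


section Aux

variable {p : ℕ} [Fact p.Prime]

lemma mem_Nset' {a : ZMod p} : a ∈ Nset p ↔ a ≠ 0 ∧ ¬∃ b : ZMod p, b ^ 2 = a := by
  simp [Nset]

lemma mem_Qset' {a : ZMod p} : a ∈ Qset p ↔ a ≠ 0 ∧ ∃ b : ZMod p, b ^ 2 = a := by
  simp [Qset]

lemma ringChar_ne_two' (hp4 : p % 4 = 3) : ringChar (ZMod p) ≠ 2 := by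
  rw [ZMod.ringChar_zmod_n]; omega

lemma chi_of_mem_Nset {a : ZMod p} (ha : a ∈ Nset p) :
    quadraticChar (ZMod p) a = -1 := by
  rw [mem_Nset'] at ha
  refine quadraticChar_neg_one_iff_not_isSquare.mpr ?_
  rw [isSquare_iff_exists_sq]
  exact fun ⟨r, hr⟩ => ha.2 ⟨r, hr.symm⟩

lemma chi_of_not_mem_Nset {a : ZMod p} (h0 : a ≠ 0) (ha : a ∉ Nset p) :
    quadraticChar (ZMod p) a = 1 := by
  rw [mem_Nset'] at ha
  push_neg at ha
  obtain ⟨b, hb⟩ := ha h0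
  refine (quadraticChar_one_iff_isSquare h0).mpr ?_
  rw [isSquare_iff_exists_sq]
  exact ⟨b, hb.symm⟩

lemma tricho (c : ZMod p) :
    (if c ∈ Nset p then (1:ℕ) else 0) + (if c ∈ Qset p then 1 else 0)
      + (if c = 0 then 1 else 0) = 1 := by
  by_cases h0 : c = 0
  · simp [h0, mem_Nset', mem_Qset']
  · by_cases hsq : ∃ b : ZMod p, b ^ 2 = c
    · simp [mem_Nset', mem_Qset', h0, hsq]
    · simp [mem_Nset', mem_Qset', h0, hsq]

lemma chi_eq_ind (c : ZMod p) :
    (quadraticChar (ZMod p) c : ℤ)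
      = (if c ∈ Qset p then (1:ℤ) else 0) - (if c ∈ Nset p then 1 else 0) := by
  by_cases h0 : c = 0
  · simp [h0, mem_Nset', mem_Qset']
  · by_cases hsq : ∃ b : ZMod p, b ^ 2 = c
    · rw [if_pos (mem_Qset'.mpr ⟨h0, hsq⟩), if_neg (fun h => (mem_Nset'.mp h).2 hsq)]
      obtain ⟨b, hb⟩ := hsq
      rw [(quadraticChar_one_iff_isSquare h0).mpr (isSquare_iff_exists_sq c |>.mpr ⟨b, hb.symm⟩)]
      ring
    · rw [if_neg (fun h => hsq (mem_Qset'.mp h).2), if_pos (mem_Nset'.mpr ⟨h0, hsq⟩)]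
      rw [chi_of_mem_Nset (mem_Nset'.mpr ⟨h0, hsq⟩)]
      ring

lemma NQ_card (hp4 : p % 4 = 3) :
    (Qset p).card = (Nset p).card ∧ (Nset p).card + (Qset p).card + 1 = p := by
  have hp2 := ringChar_ne_two' (p := p) hp4
  have hsum := quadraticChar_sum_zero hp2
  have h1 : (0 : ℤ) = ((Qset p).card : ℤ) - ((Nset p).card : ℤ) := by
    rw [← hsum]
    push_cast
    rw [Finset.sum_congr rfl (fun c _ => chi_eq_ind c), Finset.sum_sub_distrib]
    rw [Finset.sum_boole, Finset.sum_boole]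
    have hq : (univ.filter fun c : ZMod p => c ∈ Qset p) = Qset p := by
      ext c; simp
    have hn : (univ.filter fun c : ZMod p => c ∈ Nset p) = Nset p := by
      ext c; simp
    rw [hq, hn]
  have h2 : (Nset p).card + (Qset p).card + 1 = p := by
    have := Finset.sum_congr rfl (fun c (_ : c ∈ (univ : Finset (ZMod p))) => tricho c)
    rw [Finset.sum_add_distrib, Finset.sum_add_distrib, ← Finset.card_filter,
      ← Finset.card_filter, ← Finset.card_filter] at this
    simp only [Finset.sum_const, smul_eq_mul, mul_one] at this
    rw [Finset.filter_mem_eq_inter, Finset.filter_mem_eq_inter, Finset.univ_inter,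
      Finset.univ_inter] at this
    have h0 : (univ.filter fun c : ZMod p => c = 0).card = 1 := by
      rw [Finset.filter_eq']; simp
    rw [h0] at this
    rw [this, Finset.card_univ, ZMod.card]
  exact ⟨by exact_mod_cast sub_eq_zero.mp h1.symm, h2⟩

lemma Nset_card_odd (hp4 : p % 4 = 3) : Odd (Nset p).card := by
  obtain ⟨h1, h2⟩ := NQ_card (p := p) hp4
  rw [Nat.odd_iff]; omega

end Aux

section Aux2

variable {p : ℕ} [Fact p.Prime]

lemma conv_rOf (A S : Finset (ZMod p)) (a : ZMod p) :
    conv (rOf A) (rOf S) a = (((S.filter fun s => a - s ∈ A).card : ℕ) : ZMod 2) := by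
  have h1 : conv (rOf A) (rOf S) a
      = (((Finset.univ.filter fun b : ZMod p => b ∈ A ∧ a - b ∈ S).card : ℕ) : ZMod 2) := by
    rw [Finset.card_filter, Nat.cast_sum]
    unfold conv rOf
    refine Finset.sum_congr rfl fun b _ => ?_
    by_cases hb : b ∈ A <;> by_cases hs : a - b ∈ S <;> simp [hb, hs]
  rw [h1]
  congr 1
  refine Finset.card_nbij' (fun b => a - b) (fun s => a - s) ?_ ?_ ?_ ?_
  · intro b hb
    simp only [Finset.mem_coe, Finset.mem_filter, Finset.mem_univ, true_and] at hb ⊢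
    constructor
    · exact hb.2
    · simpa [sub_sub_cancel] using hb.1
  · intro s hs
    simp only [Finset.mem_coe, Finset.mem_filter, Finset.mem_univ, true_and] at hs ⊢
    exact ⟨hs.2, by simpa [sub_sub_cancel] using hs.1⟩
  · intro b _; simp [sub_sub_cancel]
  · intro s _; simp [sub_sub_cancel]

lemma wt_conv (A S : Finset (ZMod p)) :
    wt (conv (rOf A) (rOf S))
      = (Finset.univ.filter fun a : ZMod p =>
          Odd ((S.filter fun s => a - s ∈ A).card)).card := by
  unfold wt
  congr 1
  ext a
  simp only [Finset.mem_filter, Finset.mem_univ, true_and]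
  rw [conv_rOf, Ne, ZMod.natCast_eq_zero_iff, Nat.odd_iff]
  omega

end Aux2

section Aux3

variable {p : ℕ} [Fact p.Prime]

lemma filter_split (S : Finset (ZMod p)) (P : ZMod p → Prop) [DecidablePred P] :
    (S.filter P).card + (Sᶜ.filter P).card = (univ.filter P).card := by
  rw [← Finset.card_union_of_disjoint
      (Finset.disjoint_filter_filter disjoint_compl_right),
    ← Finset.filter_union, Finset.union_compl]

lemma shift_count (a : ZMod p) (A : Finset (ZMod p)) :
    (univ.filter fun s : ZMod p => a - s ∈ A).card = A.card := by
  refine Finset.card_nbij' (fun s => a - s) (fun t => a - t) ?_ ?_ ?_ ?_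
  · intro s hs; simpa using (Finset.mem_filter.mp hs).2
  · intro t ht; simp [sub_sub_cancel, Finset.mem_coe.mp ht]
  · intro s _; simp [sub_sub_cancel]
  · intro t _; simp [sub_sub_cancel]

lemma part_count (S : Finset (ZMod p)) (a : ZMod p) :
    (S.filter fun s => a - s ∈ Nset p).card + (S.filter fun s => a - s ∈ Qset p).card
      + (S.filter fun s => a - s = 0).card = S.card := by
  rw [Finset.card_filter, Finset.card_filter, Finset.card_filter,
    ← Finset.sum_add_distrib, ← Finset.sum_add_distrib, Finset.card_eq_sum_ones]
  exact Finset.sum_congr rfl fun s _ => tricho _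

lemma zero_count (S : Finset (ZMod p)) (a : ZMod p) :
    (S.filter fun s => a - s = 0).card = if a ∈ S then 1 else 0 := by
  have h : (S.filter fun s => a - s = 0) = S.filter fun s => s = a := by
    refine Finset.filter_congr fun s _ => ?_
    rw [sub_eq_zero, eq_comm]
  rw [h, Finset.filter_eq']
  split <;> simp

lemma prod_chi (T : Finset (ZMod p)) (a : ZMod p) (ha : a ∉ T) :
    (quadraticChar (ZMod p) (∏ b ∈ T, (a - b)) : ℤ)
      = (-1) ^ ((T.filter fun b => a - b ∈ Nset p).card) := by
  rw [map_prod]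
  rw [← Finset.prod_filter_mul_prod_filter_not T (fun b => a - b ∈ Nset p)]
  have h1 : ∏ b ∈ T.filter (fun b => a - b ∈ Nset p), (quadraticChar (ZMod p) (a - b) : ℤ)
      = (-1) ^ ((T.filter fun b => a - b ∈ Nset p).card) := by
    rw [Finset.prod_congr rfl (fun b hb => chi_of_mem_Nset (Finset.mem_filter.mp hb).2),
      Finset.prod_const]
  have h2 : ∏ b ∈ T.filter (fun b => ¬(a - b ∈ Nset p)), (quadraticChar (ZMod p) (a - b) : ℤ)
      = 1 := by
    refine Finset.prod_eq_one fun b hb => ?_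
    obtain ⟨hbT, hbN⟩ := Finset.mem_filter.mp hb
    refine chi_of_not_mem_Nset ?_ hbN
    rw [sub_ne_zero]
    exact fun h => ha (h ▸ hbT)
  rw [h1, h2, mul_one]

end Aux3

lemma point_count {p : ℕ} [Fact p.Prime] (hp4 : p % 4 = 3) (T : Finset (ZMod p)) :
    (Nat.card {xy : ZMod p × ZMod p // xy.2 ^ 2 = ∏ b ∈ T, (xy.1 - b)} : ℤ)
      = (p : ℤ) + charSum p T := by
  have hp2 := ringChar_ne_two' (p := p) hp4
  rw [Nat.card_congr (Equiv.subtypeProdEquivSigmaSubtype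
      (fun x y : ZMod p => y ^ 2 = ∏ b ∈ T, (x - b)))]
  rw [Nat.card_eq_fintype_card, Fintype.card_sigma, Nat.cast_sum]
  have key : ∀ x : ZMod p, ((Fintype.card {y : ZMod p // y ^ 2 = ∏ b ∈ T, (x - b)} : ℕ) : ℤ)
      = (quadraticChar (ZMod p) (∏ b ∈ T, (x - b)) : ℤ) + 1 := by
    intro x
    rw [← quadraticChar_card_sqrts hp2 (∏ b ∈ T, (x - b))]
    congr 1
    exact (Set.toFinset_card {y : ZMod p | y ^ 2 = ∏ b ∈ T, (x - b)}).symm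
  rw [Finset.sum_congr rfl (fun x _ => key x), Finset.sum_add_distrib, Finset.sum_const,
    Finset.card_univ, ZMod.card, nsmul_eq_mul, mul_one, charSum]
  ring

/-- Weight of a QQR codeword for `|S|` odd and `p ≡ 3 (mod 4)`. -/
theorem qqr_weight_odd_three_mod_four (p : ℕ) [Fact p.Prime] (hp4 : p % 4 = 3)
    (S : Finset (ZMod p)) (hS : S ≠ Finset.univ) (hodd : Odd S.card) :
    (wt2 (qqr p S) : ℤ) = (p : ℤ) + charSum p Sᶜ ∧
    (wt2 (qqr p S) : ℤ) = (Xcard p Sᶜ : ℤ) - 2 := by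
  have hNodd : (Nset p).card % 2 = 1 := Nat.odd_iff.mp (Nset_card_odd hp4)
  have hSodd : S.card % 2 = 1 := Nat.odd_iff.mp hodd
  have key : (wt2 (qqr p S) : ℤ) = (p : ℤ) + charSum p Sᶜ := by
    have hw : wt2 (qqr p S)
        = (univ.filter fun a : ZMod p => Odd ((S.filter fun s => a - s ∈ Nset p).card)).card
        + (univ.filter fun a : ZMod p => Odd ((S.filter fun s => a - s ∈ Qset p).card)).card := by
      show wt (conv (rOf (Nset p)) (rOf S)) + wt (conv (rOf (Qset p)) (rOf S)) = _
      rw [wt_conv, wt_conv]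
    have hptw : (p:ℤ) + charSum p Sᶜ
        = ∑ a : ZMod p, (1 + (quadraticChar (ZMod p) (∏ b ∈ Sᶜ, (a - b)) : ℤ)) := by
      rw [Finset.sum_add_distrib, Finset.sum_const, Finset.card_univ, ZMod.card,
        nsmul_eq_mul, mul_one, charSum]
    rw [hw, hptw, Nat.cast_add, ← Finset.sum_boole, ← Finset.sum_boole,
      ← Finset.sum_add_distrib]
    refine Finset.sum_congr rfl fun a _ => ?_
    have hpart := part_count S a
    have hz := zero_count S a
    by_cases haS : a ∈ S
    · have haC : a ∉ Sᶜ := by simp [haS]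
      have hprod := prod_chi Sᶜ a haC
      have hsplit := filter_split S (fun s => a - s ∈ Nset p)
      have hshift := shift_count a (Nset p)
      rw [hz, if_pos haS] at hpart
      rw [hprod]
      by_cases h1 : Odd ((S.filter fun s => a - s ∈ Nset p).card)
      · have h1' := Nat.odd_iff.mp h1
        have hq : Odd ((S.filter fun s => a - s ∈ Qset p).card) :=
          Nat.odd_iff.mpr (by omega)
        have hev : Even ((Sᶜ.filter fun s => a - s ∈ Nset p).card) :=
          Nat.even_iff.mpr (by omega)
        rw [if_pos h1, if_pos hq, Even.neg_one_pow hev]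
      · have h1' := Nat.not_odd_iff.mp h1
        have hq : ¬ Odd ((S.filter fun s => a - s ∈ Qset p).card) :=
          Nat.not_odd_iff.mpr (by omega)
        have hod : Odd ((Sᶜ.filter fun s => a - s ∈ Nset p).card) :=
          Nat.odd_iff.mpr (by omega)
        rw [if_neg h1, if_neg hq, Odd.neg_one_pow hod]
        ring
    · have haC : a ∈ Sᶜ := Finset.mem_compl.mpr haS
      rw [Finset.prod_eq_zero haC (sub_self a)]
      rw [hz, if_neg haS] at hpart
      by_cases h1 : Odd ((S.filter fun s => a - s ∈ Nset p).card)
      · have h1' := Nat.odd_iff.mp h1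
        have hq : ¬ Odd ((S.filter fun s => a - s ∈ Qset p).card) :=
          Nat.not_odd_iff.mpr (by omega)
        rw [if_pos h1, if_neg hq]
        simp
      · have h1' := Nat.not_odd_iff.mp h1
        have hq : Odd ((S.filter fun s => a - s ∈ Qset p).card) :=
          Nat.odd_iff.mpr (by omega)
        rw [if_neg h1, if_pos hq]
        simp
  refine ⟨key, ?_⟩
  have hcle : S.card ≤ p := by
    have := Finset.card_le_card (Finset.subset_univ S)
    simpa [Finset.card_univ, ZMod.card] using this
  have heven : Even (Sᶜ.card) := by
    rw [Finset.card_compl, ZMod.card, Nat.even_iff]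
    omega
  rw [key, Xcard, if_pos heven]
  push_cast
  rw [point_count hp4 Sᶜ]
  ring
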